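/- For the substitution σ defined below: for every pattern P ∈ patt(S_surf) and every C_σ-path γ of P from a cell with vector (x_0,y_0) to a cell with vector (x_1,y_1), the first coordinate of ω_σ(γ) equals −(y_1 − y_0). In particular, image vectors of horizontal steps have first coordinate 0 and image vectors of upward vertical steps have first coordinate −1. -/

import Mathlib

open scoped Classical

/-- A combinatorial substitution on alphabet `A` with vectors in `V`:
a base rule sending each letter to a pattern, together with a deterministic
finite set of concatenation rules.  `rule t t' u = some v` encodes the
concatenation rule `(t, t', u) ↦ v`. -/
structure Subst (A : Type*) (V : Type*) [AddCommGroup V] where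
  /-- the base rule -/
  base : A → Finset (V × A)
  /-- the image of a letter is a pattern: its cells have distinct vectors -/
  basePat : ∀ t : A, ∀ c ∈ base t, ∀ c' ∈ base t, c.1 = c'.1 → c = c'
  /-- the concatenation rules, as a partial function -/
  rule : A → A → V → Option V
  /-- there are finitely many concatenation rules -/
  finiteRules : {u : V | ∃ t t', rule t t' u ≠ none}.Finite
  /-- determinism: no two rules with left-hand sides `(t,t',u)` and `(t,t',-u)` -/
  det : ∀ t t' u, (rule t t' u).isSome → (rule t t' (-u)).isSome → u = -u

/-- A pattern is a finite set of cells with pairwise distinct vectors. -/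
def IsPattern {V A : Type*} (P : Finset (V × A)) : Prop :=
  ∀ c ∈ P, ∀ c' ∈ P, c.1 = c'.1 → c = c'

namespace Subst

variable {A V : Type*} [AddCommGroup V]

/-- `σ_rule(c, c')`: the relative position of the images of the two cells
`c`, `c'`, when some concatenation rule applies to them. -/
def ruleVec (σ : Subst A V) (c c' : V × A) : Option V :=
  match σ.rule c.2 c'.2 (c'.1 - c.1) with
  | some v => some v
  | none => (σ.rule c'.2 c.2 (c.1 - c'.1)).map (fun v => -v)

/-- The image vector `ω_σ(γ)` of a path `γ`. -/
def omega (σ : Subst A V) (γ : List (V × A)) : V :=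
  ((γ.zip γ.tail).map (fun p => (σ.ruleVec p.1 p.2).getD 0)).sum

/-- A `C_σ`-path: a nonempty sequence of cells in which any two consecutive
cells form a translated copy of a starting pattern of `σ`, and any two cells
with the same vector are equal. -/
def IsPath (σ : Subst A V) (γ : List (V × A)) : Prop :=
  γ ≠ [] ∧ γ.Chain' (fun c c' => (σ.ruleVec c c').isSome) ∧
    ∀ c ∈ γ, ∀ c' ∈ γ, c.1 = c'.1 → c = c'

/-- A `C_σ`-path of the pattern `P`. -/
def IsPathOf (σ : Subst A V) (P : Finset (V × A)) (γ : List (V × A)) : Prop :=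
  σ.IsPath γ ∧ ∀ c ∈ γ, c ∈ P

/-- A `C_σ`-loop of the pattern `P`. -/
def IsLoopOf (σ : Subst A V) (P : Finset (V × A)) (γ : List (V × A)) : Prop :=
  σ.IsPathOf P γ ∧ γ.head? = γ.getLast?

/-- `P` is `C_σ`-covered: any two of its cells are joined by a `C_σ`-path of `P`. -/
def Covered (σ : Subst A V) (P : Finset (V × A)) : Prop :=
  ∀ c ∈ P, ∀ c' ∈ P,
    ∃ γ, σ.IsPathOf P γ ∧ γ.head? = some c ∧ γ.getLast? = some c'

/-- `σ` is consistent on `P`: any two `C_σ`-paths of `P` with the same first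
and last cells have the same image vector. -/
def ConsistentOn (σ : Subst A V) (P : Finset (V × A)) : Prop :=
  ∀ γ γ' : List (V × A), σ.IsPathOf P γ → σ.IsPathOf P γ' →
    γ.head? = γ'.head? → γ.getLast? = γ'.getLast? → σ.omega γ = σ.omega γ'

/-- `σ` is consistent: it is consistent on every `C_σ`-covered pattern. -/
def Consistent (σ : Subst A V) : Prop :=
  ∀ P : Finset (V × A), IsPattern P → σ.Covered P → σ.ConsistentOn P

/-- The support of the image of a letter. -/
noncomputable def supp (σ : Subst A V) (t : A) : Finset V :=
  (σ.base t).image Prod.fst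

/-- `σ` is non-overlapping on `P`: the images of two distinct cells of `P`
joined by a `C_σ`-path of `P` have disjoint supports. -/
def NonOverlappingOn (σ : Subst A V) (P : Finset (V × A)) : Prop :=
  ∀ c ∈ P, ∀ c' ∈ P, c ≠ c' → ∀ γ, σ.IsPathOf P γ →
    γ.head? = some c → γ.getLast? = some c' →
    ∀ b ∈ σ.supp c'.2, σ.omega γ + b ∉ σ.supp c.2

/-- `σ` is non-overlapping: it is non-overlapping on every `C_σ`-covered pattern. -/
def NonOverlapping (σ : Subst A V) : Prop :=
  ∀ P : Finset (V × A), IsPattern P → σ.Covered P → σ.NonOverlappingOn P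

end Subst

/-- The three-letter alphabet `{1, 2, 3}`. -/
inductive L : Type where
  | l1 : L
  | l2 : L
  | l3 : L
deriving DecidableEq

instance : Fintype L :=
  ⟨{L.l1, L.l2, L.l3}, fun x => by cases x <;> simp⟩

open L

/-- The horizontal concatenation rules `(t, t', (1,0)) ↦ v`. -/
def hruleS : L → L → Option (ℤ × ℤ)
  | l1, l1 => some (0, 2)
  | l1, l2 => some (0, 2)
  | l1, l3 => some (0, 2)
  | l2, l1 => some (0, 1)
  | l2, l2 => some (0, 1)
  | l2, l3 => none
  | l3, l1 => some (0, 1)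
  | l3, l2 => some (0, 1)
  | l3, l3 => some (0, 1)

/-- The vertical concatenation rules `(t, t', (0,1)) ↦ v`. -/
def vruleS : L → L → Option (ℤ × ℤ)
  | l1, l1 => some (-1, -1)
  | l1, l2 => some (-1, 0)
  | l1, l3 => some (-1, 0)
  | l2, l1 => some (-1, -1)
  | l2, l2 => some (-1, 0)
  | l2, l3 => some (-1, 0)
  | l3, l1 => none
  | l3, l2 => some (-1, -1)
  | l3, l3 => some (-1, -1)

/-- The substitution of Example `mini`, coming from the theory of stepped
surfaces:
`1 ↦ {[(0,0),2], [(0,1),1]}`, `2 ↦ {[(0,0),3]}`, `3 ↦ {[(0,0),1]}`,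
with the sixteen concatenation rules `hruleS` and `vruleS`. -/
noncomputable def sigmaS : Subst L (ℤ × ℤ) where
  base t :=
    match t with
    | l1 => {((0, 0), l2), ((0, 1), l1)}
    | l2 => {((0, 0), l3)}
    | l3 => {((0, 0), l1)}
  basePat := by intro t; cases t <;> decide
  rule t t' u :=
    if u = ((1 : ℤ), (0 : ℤ)) then hruleS t t'
    else if u = ((0 : ℤ), (1 : ℤ)) then vruleS t t' else none
  finiteRules := by
    apply Set.Finite.subset
      ((Set.finite_singleton (((0 : ℤ), (1 : ℤ)) : ℤ × ℤ)).insert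
        (((1 : ℤ), (0 : ℤ)) : ℤ × ℤ))
    rintro u ⟨t, t', h⟩
    try simp only at h
    split_ifs at h with h1 h2
    · exact Set.mem_insert_iff.2 (Or.inl h1)
    · exact Set.mem_insert_iff.2 (Or.inr h2)
    · exact absurd rfl h
  det := by
    intro t t' u h1 h2
    exfalso
    try simp only at h1 h2
    have hu : u = ((1 : ℤ), (0 : ℤ)) ∨ u = ((0 : ℤ), (1 : ℤ)) := by
      split_ifs at h1 with hA hB
      · exact Or.inl hA
      · exact Or.inr hB
      · simp at h1
    have hnu : -u = ((1 : ℤ), (0 : ℤ)) ∨ -u = ((0 : ℤ), (1 : ℤ)) := by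
      split_ifs at h2 with hC hD
      · exact Or.inl hC
      · exact Or.inr hD
      · simp at h2
    rcases hu with rfl | rfl <;> rcases hnu with h | h <;> revert h <;> decide

/-- The 28 allowed `2 × 2` patterns, written
(bottom-left, bottom-right, top-left, top-right). -/
def allowedSurf : List (L × L × L × L) :=
  [(l1, l1, l1, l1), (l1, l1, l2, l1), (l1, l1, l3, l1),
   (l1, l2, l1, l1), (l1, l2, l2, l1), (l1, l2, l3, l1),
   (l1, l3, l1, l2), (l1, l3, l1, l3), (l1, l3, l2, l2),
   (l1, l3, l3, l2), (l1, l3, l3, l3),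
   (l2, l1, l1, l2), (l2, l1, l1, l3), (l2, l1, l2, l2),
   (l2, l1, l3, l2), (l2, l1, l3, l3),
   (l2, l2, l1, l2), (l2, l2, l1, l3), (l2, l2, l2, l2),
   (l2, l2, l3, l2), (l2, l2, l3, l3),
   (l3, l1, l2, l1), (l3, l1, l3, l1),
   (l3, l2, l2, l1), (l3, l2, l3, l1),
   (l3, l3, l2, l2), (l3, l3, l3, l2), (l3, l3, l3, l3)]

/-- The set of configurations whose `2 × 2` sub-patterns are all allowed:
codings of stepped surfaces. -/
def Ssurf : Set ((ℤ × ℤ) → L) :=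
  {x | ∀ v : ℤ × ℤ, (x v, x (v + (1, 0)), x (v + (0, 1)), x (v + (1, 1))) ∈ allowedSurf}

/-- The pattern `P` appears in the configuration `x` (up to a translation). -/
def AppearsIn (x : (ℤ × ℤ) → L) (P : Finset ((ℤ × ℤ) × L)) : Prop :=
  ∃ w : ℤ × ℤ, ∀ c ∈ P, x (c.1 + w) = c.2

/-- The pattern `P` appears in some configuration of `S`. -/
def AppearsInSys (S : Set ((ℤ × ℤ) → L)) (P : Finset ((ℤ × ℤ) × L)) : Prop :=
  ∃ x ∈ S, AppearsIn x P

lemma sigmaS_rule_eq (t t' : L) (u : ℤ × ℤ) :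
    sigmaS.rule t t' u =
      if u = ((1 : ℤ), (0 : ℤ)) then hruleS t t'
      else if u = ((0 : ℤ), (1 : ℤ)) then vruleS t t' else none := rfl

lemma hruleS_fst (t t' : L) (v : ℤ × ℤ) (h : hruleS t t' = some v) : v.1 = 0 := by
  cases t <;> cases t' <;> simp only [hruleS, Option.some.injEq] at h <;>
    first
    | (subst h; rfl)
    | exact absurd h (by simp [hruleS])

lemma vruleS_fst (t t' : L) (v : ℤ × ℤ) (h : vruleS t t' = some v) : v.1 = -1 := by
  cases t <;> cases t' <;> simp only [vruleS, Option.some.injEq] at h <;>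
    first
    | (subst h; rfl)
    | exact absurd h (by simp [vruleS])

lemma sigmaS_rule_fst (t t' : L) (u v : ℤ × ℤ) (h : sigmaS.rule t t' u = some v) :
    v.1 = -u.2 := by
  by_cases h1 : u = ((1 : ℤ), (0 : ℤ))
  · subst h1
    rw [sigmaS_rule_eq, if_pos rfl] at h
    simpa using hruleS_fst t t' v h
  · by_cases h2 : u = ((0 : ℤ), (1 : ℤ))
    · subst h2
      rw [sigmaS_rule_eq, if_neg h1, if_pos rfl] at h
      simpa using vruleS_fst t t' v h
    · rw [sigmaS_rule_eq, if_neg h1, if_neg h2] at h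
      cases h

lemma sigmaS_ruleVec_fst (c c' : (ℤ × ℤ) × L) (h : (sigmaS.ruleVec c c').isSome) :
    ((sigmaS.ruleVec c c').getD 0).1 = -(c'.1.2 - c.1.2) := by
  unfold Subst.ruleVec at h ⊢
  cases hr : sigmaS.rule c.2 c'.2 (c'.1 - c.1) with
  | some v =>
      simp only [hr]
      have := sigmaS_rule_fst _ _ _ _ hr
      simp only [Option.getD_some, this, Prod.snd_sub]
  | none =>
      simp only [hr] at h ⊢
      cases hr' : sigmaS.rule c'.2 c.2 (c.1 - c'.1) with
      | none => simp [hr'] at h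
      | some w =>
          simp only [hr', Option.map_some]
          have := sigmaS_rule_fst _ _ _ _ hr'
          simp only [Option.getD_some, Prod.fst_neg, this, Prod.snd_sub]
          ring

lemma sigmaS_omega_fst (γ : List ((ℤ × ℤ) × L))
    (hch : γ.Chain' (fun c c' => (sigmaS.ruleVec c c').isSome))
    (v₀ v₁ : ℤ × ℤ) (t₀ t₁ : L)
    (h0 : γ.head? = some (v₀, t₀)) (h1 : γ.getLast? = some (v₁, t₁)) :
    (sigmaS.omega γ).1 = -(v₁.2 - v₀.2) := by
  induction γ generalizing v₀ t₀ with
  | nil => cases h0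
  | cons c rest ih =>
    cases rest with
    | nil =>
        simp only [List.head?_cons, Option.some.injEq] at h0
        simp only [List.getLast?_singleton, Option.some.injEq] at h1
        have : v₀ = v₁ := congrArg Prod.fst (h0.symm.trans h1)
        simp [Subst.omega, this]
    | cons c' rest' =>
        simp only [List.head?_cons, Option.some.injEq] at h0
        subst h0
        have hstep : (sigmaS.ruleVec (v₀, t₀) c').isSome := (List.isChain_cons_cons.1 hch).1
        have hch' : (c' :: rest').Chain' (fun a b => (sigmaS.ruleVec a b).isSome) :=
          (List.isChain_cons_cons.1 hch).2
        have h1' : (c' :: rest').getLast? = some (v₁, t₁) := by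
          rwa [List.getLast?_cons_cons] at h1
        have homega : sigmaS.omega ((v₀, t₀) :: c' :: rest') =
            (sigmaS.ruleVec (v₀, t₀) c').getD 0 + sigmaS.omega (c' :: rest') := by
          simp [Subst.omega]
        have hih := ih hch' c'.1 c'.2 (by simp) h1'
        rw [homega, Prod.fst_add, hih, sigmaS_ruleVec_fst _ c' hstep]
        show -(c'.1.2 - v₀.2) + -(v₁.2 - c'.1.2) = -(v₁.2 - v₀.2)
        ring

/-- For the stepped-surface substitution `σ`: for every
pattern `P ∈ patt(S_surf)` and every `C_σ`-path `γ` of `P` from a cell with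
vector `(x₀, y₀)` to a cell with vector `(x₁, y₁)`, the first coordinate of
`ω_σ(γ)` equals `-(y₁ - y₀)`.  In particular image vectors of horizontal
steps have first coordinate `0`, and image vectors of upward vertical steps
have first coordinate `-1`. -/
theorem sigmaS_omega_first_coordinate :
    (∀ P : Finset ((ℤ × ℤ) × L), IsPattern P → AppearsInSys Ssurf P →
      ∀ (γ : List ((ℤ × ℤ) × L)) (v₀ v₁ : ℤ × ℤ) (t₀ t₁ : L),
        sigmaS.IsPathOf P γ → γ.head? = some (v₀, t₀) →
        γ.getLast? = some (v₁, t₁) →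
        (sigmaS.omega γ).1 = -(v₁.2 - v₀.2)) ∧
    (∀ (t t' : L) (v : ℤ × ℤ),
      sigmaS.rule t t' (((1 : ℤ), (0 : ℤ)) : ℤ × ℤ) = some v → v.1 = 0) ∧
    (∀ (t t' : L) (v : ℤ × ℤ),
      sigmaS.rule t t' (((0 : ℤ), (1 : ℤ)) : ℤ × ℤ) = some v → v.1 = -1) := by
  refine ⟨?_, ?_, ?_⟩
  · intro P _ _ γ v₀ v₁ t₀ t₁ hpath h0 h1
    exact sigmaS_omega_fst γ hpath.1.2.1 v₀ v₁ t₀ t₁ h0 h1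
  · intro t t' v h
    rw [sigmaS_rule_eq, if_pos rfl] at h
    exact hruleS_fst t t' v h
  · intro t t' v h
    rw [sigmaS_rule_eq, if_neg (by decide), if_pos rfl] at h
    exact vruleS_fst t t' v h
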